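/- arXiv:1105.3238 — 3 statements merged into one kernel-verified Lean document; each statement's English description precedes it below -/
import Mathlib

section
/- (Linusson-type theorem, planar case) Let C be the square conv{(±1,0),(0,±1)} embedded as a 2-dimensional section of a 3-simplex T (i.e., C = T ∩ H for a plane H, with the four vertices of C lying in the interior of edges of T). Then there is no affine form w : T → [0,1] whose restriction to C equals a given nonconstant extreme form v of Ω(C) (i.e., a form v attaining both 0 and 1 on C along two opposite edges), whenever the 0-level and 1-level planes of any affine extension of v necessarily cut the interior of T. -/
open Set

def IsAffineOn {n : ℕ} (C : Set (Fin n → ℝ)) (f : C → ℝ) : Prop :=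
  ∀ (x y : C) (t : ℝ), t ∈ Set.Icc (0:ℝ) 1 →
    ∀ h : t • (x : Fin n → ℝ) + (1 - t) • (y : Fin n → ℝ) ∈ C,
      f ⟨_, h⟩ = t * f x + (1 - t) * f y

def OmegaSet {n : ℕ} (C : Set (Fin n → ℝ)) : Set (C → ℝ) :=
  {f | IsAffineOn C f ∧ ∀ x : C, f x ∈ Set.Icc (0:ℝ) 1}

/-- Linusson-type theorem, planar case: let `T` be the tetrahedron with
vertices `a=(1,1,1)`, `b=(1,-1,-1)`, `c=(-1,1,-1)`, `d=(-1,-1,1)`, and let `C = T ∩ {z=0}`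
be the square section `conv{(±1,0,0),(0,±1,0)}`. The extreme form `v` of `Ω(C)` given by
`v(x,y,0) = (1 - x - y)/2` (which is `0` on one edge of `C` and `1` on the opposite edge)
admits no affine extension `w : T → [0,1]`: no `w ∈ Ω(T)` restricts to `v` on `C`. -/
theorem no_extension_of_extreme_form_of_section
    (T C : Set (Fin 3 → ℝ))
    (hT : T = convexHull ℝ
      {(![1,1,1] : Fin 3 → ℝ), ![1,-1,-1], ![-1,1,-1], ![-1,-1,1]})
    (hC : C = T ∩ {x | x 2 = 0}) :
    ¬ ∃ w ∈ OmegaSet T, ∀ x : T, (x : Fin 3 → ℝ) ∈ C →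
        w x = (1 - (x : Fin 3 → ℝ) 0 - (x : Fin 3 → ℝ) 1) / 2 := by
  rintro ⟨w, ⟨haff, hbound⟩, hrest⟩
  have hconv : Convex ℝ T := hT ▸ convex_convexHull ℝ _
  have ha : (![1,1,1] : Fin 3 → ℝ) ∈ T := by
    rw [hT]; exact subset_convexHull ℝ _ (by simp)
  have hc : (![-1,1,-1] : Fin 3 → ℝ) ∈ T := by
    rw [hT]; exact subset_convexHull ℝ _ (by simp)
  have hd : (![-1,-1,1] : Fin 3 → ℝ) ∈ T := by
    rw [hT]; exact subset_convexHull ℝ _ (by simp)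
  -- midpoint of a and c
  have hm1 : (1/2 : ℝ) • (![1,1,1] : Fin 3 → ℝ) + ((1:ℝ) - 1/2) • (![-1,1,-1] : Fin 3 → ℝ) ∈ T :=
    hconv ha hc (by norm_num : (0:ℝ) ≤ 1/2) (by norm_num : (0:ℝ) ≤ 1 - 1/2) (by norm_num)
  have hm2 : (1/2 : ℝ) • (![-1,1,-1] : Fin 3 → ℝ) + ((1:ℝ) - 1/2) • (![-1,-1,1] : Fin 3 → ℝ) ∈ T :=
    hconv hc hd (by norm_num : (0:ℝ) ≤ 1/2) (by norm_num : (0:ℝ) ≤ 1 - 1/2) (by norm_num)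
  have e1 := haff ⟨_, ha⟩ ⟨_, hc⟩ (1/2) (by norm_num) hm1
  have e2 := haff ⟨_, hc⟩ ⟨_, hd⟩ (1/2) (by norm_num) hm2
  have v1 := hrest ⟨_, hm1⟩ (by
    rw [hC]
    refine ⟨hm1, ?_⟩
    norm_num [Set.mem_setOf_eq, Matrix.cons_val_two])
  have v2 := hrest ⟨_, hm2⟩ (by
    rw [hC]
    refine ⟨hm2, ?_⟩
    norm_num [Set.mem_setOf_eq, Matrix.cons_val_two])
  simp only [Pi.add_apply, Pi.smul_apply] at v1 v2
  rw [e1] at v1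
  rw [e2] at v2
  have ba := hbound ⟨_, ha⟩
  have bc := hbound ⟨_, hc⟩
  have bd := hbound ⟨_, hd⟩
  simp only [Matrix.cons_val_zero, Matrix.cons_val_one, Matrix.head_cons, smul_eq_mul,
    Set.mem_Icc] at *
  nlinarith [ba.1, ba.2, bc.1, bc.2, bd.1, bd.2]
end

section
/- If f : T → C is an injective affine map from a simplex T onto a convex set C with the property that every affine form ω : C → [0,1] pulls back from some affine form on T attaining the same values (i.e., the pullback Ω-correspondence is surjective onto Ω(C)), and additionally every extreme form of Ω(C) has a preimage, then C is itself a simplex. -/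
open Set
section
namespace Simplex12

variable {N k : ℕ}

noncomputable def bmap (p : Fin k → Fin N → ℝ) : (Fin k → ℝ) →ₗ[ℝ] (Fin N → ℝ) where
  toFun x := ∑ i, x i • p i
  map_add' x y := by simp [add_smul, Finset.sum_add_distrib]
  map_smul' c x := by simp [smul_smul, Finset.smul_sum]

@[simp] lemma bmap_apply (p : Fin k → Fin N → ℝ) (x : Fin k → ℝ) :
    bmap p x = ∑ i, x i • p i := rfl

lemma convexHull_range_eq_image (p : Fin k → Fin N → ℝ) :
    convexHull ℝ (Set.range p) = bmap p '' stdSimplex ℝ (Fin k) := by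
  apply Subset.antisymm
  · apply convexHull_min
    · rintro _ ⟨i, rfl⟩
      refine ⟨Pi.single i 1, single_mem_stdSimplex ℝ i, ?_⟩
      simp [Pi.single_apply, ite_smul]
    · exact (convex_stdSimplex ℝ (Fin k)).linear_image _
  · rintro _ ⟨x, hx, rfl⟩
    rw [show bmap p x = Finset.univ.centerMass x p by
      rw [Finset.centerMass_eq_of_sum_1 _ _ hx.2]; rfl]
    exact Finset.univ.centerMass_mem_convexHull (fun i _ => hx.1 i)
      (by rw [hx.2]; norm_num) (fun i _ => mem_range_self i)

lemma bmap_inj (p : Fin k → Fin N → ℝ) (hp : AffineIndependent ℝ p) {x y : Fin k → ℝ}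
    (hx : ∑ i, x i = 1) (hy : ∑ i, y i = 1) (h : bmap p x = bmap p y) : x = y := by
  refine (affineIndependent_iff_eq_of_fintype_affineCombination_eq ℝ p).mp hp x y hx hy ?_
  rw [Finset.affineCombination_eq_linear_combination _ _ _ hx,
      Finset.affineCombination_eq_linear_combination _ _ _ hy]
  exact h

def Dset (p : Fin k → Fin N → ℝ) (C : Set (Fin N → ℝ)) : Set (Fin k → ℝ) :=
  stdSimplex ℝ (Fin k) ∩ (bmap p) ⁻¹' C

lemma master (p : Fin k → Fin N → ℝ) (hp : AffineIndependent ℝ p)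
    {T : Set (Fin N → ℝ)} (hT : T = convexHull ℝ (Set.range p))
    {C : Set (Fin N → ℝ)} (hCT : C ⊆ T)
    (hlift : ∀ ω ∈ OmegaSet C, ∃ w ∈ OmegaSet T,
      ∀ (x : Fin N → ℝ) (hx : x ∈ C), w ⟨x, hCT hx⟩ = ω ⟨x, hx⟩)
    (c : Fin k → ℝ) (hc : ∀ x ∈ Dset p C, (∑ i, c i * x i) ∈ Icc (0:ℝ) 1) :
    ∃ c' : Fin k → ℝ, (∀ i, c' i ∈ Icc (0:ℝ) 1) ∧
      ∀ x ∈ Dset p C, ∑ i, c' i * x i = ∑ i, c i * x i := by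
  classical
  have hmem : ∀ y : C, ∃ x, x ∈ Dset p C ∧ bmap p x = y := by
    intro y
    have h1 : (y : Fin N → ℝ) ∈ bmap p '' stdSimplex ℝ (Fin k) := by
      rw [← convexHull_range_eq_image, ← hT]; exact hCT y.2
    obtain ⟨x, hx, hbx⟩ := h1
    exact ⟨x, ⟨hx, by rw [mem_preimage, hbx]; exact y.2⟩, hbx⟩
  choose ξ hξD hξB using hmem
  have hξsum : ∀ y : C, ∑ i, ξ y i = 1 := fun y => (hξD y).1.2
  have hξuniq : ∀ (x) (hx : x ∈ Dset p C), ξ ⟨bmap p x, hx.2⟩ = x := by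
    intro x hx
    apply bmap_inj p hp (hξsum _) hx.1.2
    rw [hξB]
  set ω : C → ℝ := fun y => ∑ i, c i * ξ y i with hω
  have hωOmega : ω ∈ OmegaSet C := by
    constructor
    · intro x y t ht h
      have hcombo : ξ ⟨t • (x:Fin N → ℝ) + (1-t) • (y:Fin N → ℝ), h⟩
          = t • ξ x + (1-t) • ξ y := by
        apply bmap_inj p hp (hξsum _)
        · have : ∑ i, (t • ξ x + (1-t) • ξ y) i
              = t * (∑ i, ξ x i) + (1-t) * (∑ i, ξ y i) := by
            simp [Finset.sum_add_distrib, Finset.mul_sum]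
          rw [this, hξsum, hξsum]; ring
        · rw [hξB, map_add, map_smul, map_smul, hξB, hξB]
      show ∑ i, c i * ξ ⟨_, h⟩ i = t * (∑ i, c i * ξ x i) + (1-t) * (∑ i, c i * ξ y i)
      rw [hcombo, Finset.mul_sum, Finset.mul_sum, ← Finset.sum_add_distrib]
      refine Finset.sum_congr rfl fun i _ => ?_
      simp only [Pi.add_apply, Pi.smul_apply, smul_eq_mul]
      ring
    · intro y; exact hc _ (hξD y)
  obtain ⟨w, hwΩ, hwC⟩ := hlift ω hωOmega
  have hTconv : Convex ℝ T := hT ▸ convex_convexHull ℝ _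
  have hpT : ∀ i, p i ∈ T := fun i => hT ▸ subset_convexHull ℝ _ (mem_range_self i)
  set W : (Fin N → ℝ) → ℝ := fun y => if h : y ∈ T then w ⟨y, h⟩ else 0 with hWdef
  have hWeq : ∀ (y) (hy : y ∈ T), W y = w ⟨y, hy⟩ := fun y hy => dif_pos hy
  have haff : ∀ (x) (hx : x ∈ T) (y) (hy : y ∈ T) (a b : ℝ), 0 ≤ a → 0 ≤ b → a + b = 1 →
      W (a • x + b • y) = a * W x + b * W y := by
    intro x hx y hy a b ha hb hab
    obtain rfl : b = 1 - a := by linarith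
    have hmem2 : a • x + (1-a) • y ∈ T := hTconv hx hy ha hb (by ring)
    rw [hWeq _ hmem2, hWeq _ hx, hWeq _ hy]
    exact hwΩ.1 ⟨x, hx⟩ ⟨y, hy⟩ a ⟨ha, by linarith⟩ hmem2
  have hconvexOn : ConvexOn ℝ T W :=
    ⟨hTconv, fun x hx y hy a b ha hb hab => le_of_eq (haff x hx y hy a b ha hb hab)⟩
  have hconcaveOn : ConcaveOn ℝ T W :=
    ⟨hTconv, fun x hx y hy a b ha hb hab => ge_of_eq (haff x hx y hy a b ha hb hab)⟩
  have hWsum : ∀ x ∈ stdSimplex ℝ (Fin k), W (bmap p x) = ∑ i, x i * W (p i) := by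
    intro x hx
    have h1 := hconvexOn.map_sum_le (t := Finset.univ) (w := x) (p := p)
      (fun i _ => hx.1 i) hx.2 (fun i _ => hpT i)
    have h2 := hconcaveOn.le_map_sum (t := Finset.univ) (w := x) (p := p)
      (fun i _ => hx.1 i) hx.2 (fun i _ => hpT i)
    have h3 := le_antisymm h1 h2
    rw [bmap_apply]
    simpa [smul_eq_mul] using h3
  refine ⟨fun i => w ⟨p i, hpT i⟩, fun i => hwΩ.2 _, ?_⟩
  intro x hx
  have hxC : bmap p x ∈ C := hx.2
  have e3 : ω ⟨bmap p x, hxC⟩ = ∑ i, c i * x i := by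
    show ∑ i, c i * ξ ⟨bmap p x, hxC⟩ i = _
    rw [hξuniq x hx]
  calc ∑ i, w ⟨p i, hpT i⟩ * x i = ∑ i, x i * W (p i) := by
        refine Finset.sum_congr rfl fun i _ => ?_
        rw [hWeq _ (hpT i)]; ring
    _ = W (bmap p x) := (hWsum x hx.1).symm
    _ = w ⟨bmap p x, hCT hxC⟩ := hWeq _ _
    _ = ω ⟨bmap p x, hxC⟩ := hwC _ hxC
    _ = ∑ i, c i * x i := e3






lemma coeff_sum_mem_Icc {c z : Fin k → ℝ} (hc : ∀ i, c i ∈ Icc (0:ℝ) 1)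
    (hz : z ∈ stdSimplex ℝ (Fin k)) : (∑ i, c i * z i) ∈ Icc (0:ℝ) 1 := by
  constructor
  · exact Finset.sum_nonneg fun i _ => mul_nonneg (hc i).1 (hz.1 i)
  · calc ∑ i, c i * z i ≤ ∑ i, z i :=
        Finset.sum_le_sum fun i _ => by nlinarith [(hc i).1, (hc i).2, hz.1 i]
    _ = 1 := hz.2

lemma stepI {D : Set (Fin k → ℝ)} (hDs : D ⊆ stdSimplex ℝ (Fin k))
    (hDconv : Convex ℝ D) (hDcl : IsClosed D) (hDne : D.Nonempty)
    (HM : ∀ c : Fin k → ℝ, (∀ x ∈ D, (∑ i, c i * x i) ∈ Icc (0:ℝ) 1) →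
      ∃ c' : Fin k → ℝ, (∀ i, c' i ∈ Icc (0:ℝ) 1) ∧
        ∀ x ∈ D, ∑ i, c' i * x i = ∑ i, c i * x i)
    {z : Fin k → ℝ} (hz : z ∈ stdSimplex ℝ (Fin k))
    (hzspan : z ∈ affineSpan ℝ D) : z ∈ D := by
  classical
  by_contra hzD
  obtain ⟨f, u, hfD, hfz⟩ := geometric_hahn_banach_closed_point hDconv hDcl hzD
  have hlin : ∀ x : Fin k → ℝ, f x = ∑ j, x j * f (fun j' => if j = j' then 1 else 0) := by
    intro x
    have := LinearMap.pi_apply_eq_sum_univ (f : (Fin k → ℝ) →ₗ[ℝ] ℝ) x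
    simpa [smul_eq_mul] using this
  have key : ∀ (α β : ℝ) (x : Fin k → ℝ), (∑ j, x j = 1) →
      ∑ j, (α * f (fun j' => if j = j' then 1 else 0) + β) * x j = α * f x + β := by
    intro α β x hx
    have h0 : ∑ j, (α * f (fun j' => if j = j' then 1 else 0) + β) * x j
        = α * (∑ j, x j * f (fun j' => if j = j' then 1 else 0)) + β * ∑ j, x j := by
      rw [Finset.mul_sum, Finset.mul_sum, ← Finset.sum_add_distrib]
      exact Finset.sum_congr rfl fun j _ => by ring
    rw [h0, ← hlin, hx, mul_one]
  have hDcomp : IsCompact D := (isCompact_stdSimplex ℝ (Fin k)).of_isClosed_subset hDcl hDs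
  obtain ⟨a, haD, hamax⟩ := hDcomp.exists_isMaxOn hDne f.continuous.continuousOn
  obtain ⟨b, hbD, hbmin⟩ := hDcomp.exists_isMinOn hDne f.continuous.continuousOn
  have hfaz : f a < u := hfD a haD
  have hba : f b ≤ f a := hbmin haD
  have hfzb : f b < f z := lt_of_le_of_lt hba (lt_trans hfaz hfz)
  -- choose the coefficients α β of the affine function we feed to HM; also its value at z, > 1
  obtain ⟨α, β, hαβD, hαβz⟩ :
      ∃ α β : ℝ, (∀ x ∈ D, (α * f x + β) ∈ Icc (0:ℝ) 1) ∧ 1 < α * f z + β := by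
    rcases lt_or_ge (f b) (f a) with hMm | hMm
    · refine ⟨(f a - f b)⁻¹, -(f b) * (f a - f b)⁻¹, fun x hx => ?_, ?_⟩
      · have h1 : f b ≤ f x := hbmin hx
        have h2 : f x ≤ f a := hamax hx
        have h3 : (0:ℝ) < f a - f b := by linarith
        constructor
        · have : 0 ≤ (f x - f b) * (f a - f b)⁻¹ :=
            mul_nonneg (by linarith) (le_of_lt (inv_pos.mpr h3))
          calc (0:ℝ) ≤ (f x - f b) * (f a - f b)⁻¹ := this
          _ = (f a - f b)⁻¹ * f x + -(f b) * (f a - f b)⁻¹ := by ring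
        · have : (f x - f b) * (f a - f b)⁻¹ ≤ (f a - f b) * (f a - f b)⁻¹ := by
            apply mul_le_mul_of_nonneg_right (by linarith) (le_of_lt (inv_pos.mpr h3))
          rw [mul_inv_cancel₀ (ne_of_gt h3)] at this
          calc (f a - f b)⁻¹ * f x + -(f b) * (f a - f b)⁻¹
              = (f x - f b) * (f a - f b)⁻¹ := by ring
          _ ≤ 1 := this
      · have h3 : (0:ℝ) < f a - f b := by linarith
        have h4 : f a - f b < f z - f b := by linarith [lt_trans hfaz hfz]
        have : (f a - f b) * (f a - f b)⁻¹ < (f z - f b) * (f a - f b)⁻¹ :=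
          mul_lt_mul_of_pos_right h4 (inv_pos.mpr h3)
        rw [mul_inv_cancel₀ (ne_of_gt h3)] at this
        calc (1:ℝ) < (f z - f b) * (f a - f b)⁻¹ := this
        _ = (f a - f b)⁻¹ * f z + -(f b) * (f a - f b)⁻¹ := by ring
    · -- f is constant on D
      have hconst : ∀ x ∈ D, f x = f b := fun x hx =>
        le_antisymm (le_trans (hamax hx) hMm) (hbmin hx)
      have h3 : (0:ℝ) < f z - f b := by linarith
      refine ⟨2 * (f z - f b)⁻¹, -(f b) * (2 * (f z - f b)⁻¹), fun x hx => ?_, ?_⟩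
      · rw [show 2 * (f z - f b)⁻¹ * f x + -(f b) * (2 * (f z - f b)⁻¹)
            = (f x - f b) * (2 * (f z - f b)⁻¹) by ring, hconst x hx]
        simp
      · rw [show 2 * (f z - f b)⁻¹ * f z + -(f b) * (2 * (f z - f b)⁻¹)
            = 2 * ((f z - f b) * (f z - f b)⁻¹) by ring, mul_inv_cancel₀ (ne_of_gt h3)]
        norm_num
  set cvec : Fin k → ℝ := fun j => α * f (fun j' => if j = j' then 1 else 0) + β with hcvec
  have hcD : ∀ x ∈ D, (∑ i, cvec i * x i) ∈ Icc (0:ℝ) 1 := by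
    intro x hx
    rw [key α β x (hDs hx).2]
    exact hαβD x hx
  obtain ⟨c', hc'1, hc'eq⟩ := HM cvec hcD
  -- express z as an affine combination of points of D
  have hzspan' : z ∈ affineSpan ℝ (Set.range ((↑) : D → (Fin k → ℝ))) := by
    rwa [Subtype.range_coe]
  obtain ⟨s, wts, hw1, hzc⟩ := eq_affineCombination_of_mem_affineSpan hzspan'
  rw [Finset.affineCombination_eq_linear_combination _ _ _ hw1] at hzc
  have hswap : ∀ e : Fin k → ℝ,
      ∑ j, e j * z j = ∑ i ∈ s, wts i * ∑ j, e j * (i : Fin k → ℝ) j := by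
    intro e
    calc ∑ j, e j * z j
        = ∑ j, ∑ i ∈ s, e j * (wts i * (i : Fin k → ℝ) j) := by
          refine Finset.sum_congr rfl fun j _ => ?_
          rw [hzc, Finset.sum_apply, Finset.mul_sum]
          exact Finset.sum_congr rfl fun i _ => by simp [smul_eq_mul]
      _ = ∑ i ∈ s, ∑ j, e j * (wts i * (i : Fin k → ℝ) j) := Finset.sum_comm
      _ = ∑ i ∈ s, wts i * ∑ j, e j * (i : Fin k → ℝ) j := by
          refine Finset.sum_congr rfl fun i _ => ?_
          rw [Finset.mul_sum]
          exact Finset.sum_congr rfl fun j _ => by ring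
  have heval : ∑ j, c' j * z j = ∑ j, cvec j * z j := by
    rw [hswap c', hswap cvec]
    exact Finset.sum_congr rfl fun i _ => by rw [hc'eq _ i.2]
  have hzval : ∑ j, cvec j * z j = α * f z + β := key α β z hz.2
  have hin : (∑ j, c' j * z j) ∈ Icc (0:ℝ) 1 := coeff_sum_mem_Icc hc'1 hz
  rw [heval, hzval] at hin
  exact absurd hin.2 (not_le.mpr hαβz)




lemma vectorSpan_sum_zero {D : Set (Fin k → ℝ)} (hDs : D ⊆ stdSimplex ℝ (Fin k)) :
    ∀ d ∈ vectorSpan ℝ D, ∑ j, d j = 0 := by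
  intro d hd
  set sumL : (Fin k → ℝ) →ₗ[ℝ] ℝ :=
    { toFun := fun v => ∑ j, v j
      map_add' := fun v w => Finset.sum_add_distrib
      map_smul' := fun c v => by simp [Finset.mul_sum] } with hsumL
  have hle : vectorSpan ℝ D ≤ LinearMap.ker sumL := by
    rw [vectorSpan_def]
    apply Submodule.span_le.mpr
    rintro v ⟨x, hx, y, hy, rfl⟩
    simp only [SetLike.mem_coe, LinearMap.mem_ker]
    show ∑ j, (x -ᵥ y) j = 0
    have : ∀ j, (x -ᵥ y) j = x j - y j := fun j => rfl
    simp only [this, Finset.sum_sub_distrib, (hDs hx).2, (hDs hy).2, sub_self]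
  exact hle hd

lemma stepZ {D : Set (Fin k → ℝ)} (hDs : D ⊆ stdSimplex ℝ (Fin k))
    (hSpanD : ∀ z ∈ stdSimplex ℝ (Fin k), z ∈ affineSpan ℝ D → z ∈ D)
    {u : Fin k → ℝ} (hu : u ∈ D.extremePoints ℝ)
    {d : Fin k → ℝ} (hd : d ∈ vectorSpan ℝ D) (hsupp : ∀ j, u j = 0 → d j = 0) :
    d = 0 := by
  classical
  by_contra hd0
  have hsum0 : ∑ j, d j = 0 := vectorSpan_sum_zero hDs d hd
  have huD : u ∈ D := hu.1
  have huS : u ∈ stdSimplex ℝ (Fin k) := hDs huD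
  have hex : ∃ j, u j ≠ 0 := by
    by_contra h
    push_neg at h
    have := huS.2
    rw [Finset.sum_congr rfl fun j _ => h j] at this
    simp at this
  set s : Finset (Fin k) := Finset.univ.filter (fun j => u j ≠ 0) with hs
  have hsne : s.Nonempty := ⟨hex.choose, by simp [hs, hex.choose_spec]⟩
  set δ : ℝ := s.inf' hsne u with hδ
  have hδpos : 0 < δ := by
    rw [hδ, Finset.lt_inf'_iff]
    intro j hj
    have hj0 : u j ≠ 0 := by simpa [hs] using hj
    exact lt_of_le_of_ne (huS.1 j) (Ne.symm hj0)
  set ε : ℝ := δ / (∑ j, |d j| + 1) with hε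
  have habs_nonneg : 0 ≤ ∑ j, |d j| := Finset.sum_nonneg fun j _ => abs_nonneg _
  have hεpos : 0 < ε := div_pos hδpos (by linarith)
  have hεabs : ∀ j, ε * |d j| < δ := by
    intro j
    have h1 : |d j| ≤ ∑ j', |d j'| :=
      Finset.single_le_sum (f := fun j' => |d j'|) (fun j' _ => abs_nonneg _) (Finset.mem_univ j)
    have h2 : ε * |d j| ≤ ε * ∑ j', |d j'| := by
      apply mul_le_mul_of_nonneg_left h1 (le_of_lt hεpos)
    have h3 : ε * ∑ j', |d j'| < δ := by
      rw [hε, div_mul_eq_mul_div, div_lt_iff₀ (by linarith)]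
      nlinarith
    linarith
  have hmem : ∀ t : ℝ, |t| ≤ ε → u + t • d ∈ stdSimplex ℝ (Fin k) := by
    intro t ht
    constructor
    · intro j
      rcases eq_or_ne (u j) 0 with h0 | h0
      · simp [h0, hsupp j h0]
      · have h2 : δ ≤ u j := Finset.inf'_le _ (by simp [hs, h0])
        have h3 : ε * |d j| < δ := hεabs j
        have h4 : |t * d j| ≤ ε * |d j| := by
          rw [abs_mul]
          exact mul_le_mul_of_nonneg_right ht (abs_nonneg _)
        have h5 : -(t * d j) ≤ |t * d j| := neg_le_abs _
        show 0 ≤ u j + t * d j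
        linarith
    · have : ∑ j, (u j + t * d j) = (∑ j, u j) + t * ∑ j, d j := by
        rw [Finset.sum_add_distrib, Finset.mul_sum]
      show ∑ j, (u j + t * d j) = 1
      rw [this, huS.2, hsum0, mul_zero, add_zero]
  have hspan : ∀ t : ℝ, u + t • d ∈ affineSpan ℝ D := by
    intro t
    have h1 : t • d ∈ (affineSpan ℝ D).direction := by
      rw [direction_affineSpan]
      exact Submodule.smul_mem _ _ hd
    have := AffineSubspace.vadd_mem_of_mem_direction h1 (mem_affineSpan ℝ huD)
    simpa [vadd_eq_add, add_comm] using this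
  have hD1 : u + ε • d ∈ D := hSpanD _ (hmem ε (by rw [abs_of_pos hεpos])) (hspan ε)
  have hD2 : u + (-ε) • d ∈ D := hSpanD _ (hmem (-ε) (by rw [abs_neg, abs_of_pos hεpos])) (hspan (-ε))
  have hseg : u ∈ openSegment ℝ (u + ε • d) (u + (-ε) • d) := by
    refine ⟨1/2, 1/2, by norm_num, by norm_num, by norm_num, ?_⟩
    funext j
    simp only [Pi.add_apply, Pi.smul_apply, smul_eq_mul, Pi.neg_apply]
    ring
  have heq : u + ε • d = u := (hu.2 hD1 hD2 hseg)
  have hεd : ε • d = 0 := by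
    have h := congrArg (fun v => v - u) heq
    simpa using h
  exact hd0 (by simpa [hεpos.ne'] using (smul_eq_zero.mp hεd))

lemma stepIII {D : Set (Fin k → ℝ)} {u : Fin k → ℝ}
    (hZ : ∀ d ∈ vectorSpan ℝ D, (∀ j, u j = 0 → d j = 0) → d = 0)
    (huD : u ∈ D) (i : Fin k) :
    ∃ α : Fin k → ℝ, (∀ j, u j ≠ 0 → α j = 0) ∧
      ∀ x ∈ D, x i - u i = ∑ j, α j * x j := by
  classical
  set V := vectorSpan ℝ D with hV
  set Φ : V →ₗ[ℝ] (Fin k → ℝ) :=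
    { toFun := fun d => fun j => if u j = 0 then (d : Fin k → ℝ) j else 0
      map_add' := fun d e => by
        funext j; by_cases h : u j = 0 <;> simp [h]
      map_smul' := fun c d => by
        funext j; by_cases h : u j = 0 <;> simp [h] } with hΦ
  have hker : LinearMap.ker Φ = ⊥ := by
    rw [LinearMap.ker_eq_bot']
    intro d hdz
    have hd0 : (d : Fin k → ℝ) = 0 := by
      apply hZ _ d.2
      intro j hj
      have := congrFun hdz j
      simpa [hΦ, hj] using this
    exact Subtype.ext hd0
  obtain ⟨g, hg⟩ := Φ.exists_leftInverse_of_injective hker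
  set ℓ : (Fin k → ℝ) →ₗ[ℝ] ℝ := (LinearMap.proj i).comp (V.subtype.comp g) with hℓ
  refine ⟨fun j => if u j = 0 then ℓ (fun j' => if j = j' then 1 else 0) else 0,
    fun j hj => by simp [hj], ?_⟩
  intro x hx
  have hdV : x - u ∈ V := by
    have := vsub_mem_vectorSpan ℝ hx huD
    simpa [vsub_eq_sub] using this
  set d : V := ⟨x - u, hdV⟩ with hd
  have hgd : g (Φ d) = d := by
    have := LinearMap.congr_fun hg d
    simpa using this
  have h1 : x i - u i = ℓ (Φ d) := by
    show x i - u i = (V.subtype (g (Φ d))) i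
    rw [hgd]
    simp [hd]
  rw [h1, LinearMap.pi_apply_eq_sum_univ ℓ (Φ d)]
  refine Finset.sum_congr rfl fun j _ => ?_
  by_cases h : u j = 0
  · simp only [hΦ, h, if_true, LinearMap.coe_mk, AddHom.coe_mk, smul_eq_mul]
    show (x j - u j) * _ = _
    rw [h]
    ring
  · simp [hΦ, h]




lemma stepIV {D : Set (Fin k → ℝ)} (hDs : D ⊆ stdSimplex ℝ (Fin k))
    (HM : ∀ c : Fin k → ℝ, (∀ x ∈ D, (∑ i, c i * x i) ∈ Icc (0:ℝ) 1) →
      ∃ c' : Fin k → ℝ, (∀ i, c' i ∈ Icc (0:ℝ) 1) ∧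
        ∀ x ∈ D, ∑ i, c' i * x i = ∑ i, c i * x i)
    {u : Fin k → ℝ} (hu : u ∈ D.extremePoints ℝ)
    (hZ : ∀ d ∈ vectorSpan ℝ D, (∀ j, u j = 0 → d j = 0) → d = 0)
    {i : Fin k} (hi : u i ≠ 0) :
    ∀ x ∈ D, x i = u i * ∑ j, (if u j = 0 then 0 else x j) := by
  classical
  obtain ⟨α, hα0, hα⟩ := stepIII hZ hu.1 i
  set sv : Fin k → ℝ := fun j => if u j = 0 then 0 else 1 with hsv
  set σf : (Fin k → ℝ) → ℝ := fun x => ∑ j, sv j * x j with hσf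
  set β : Fin k → ℝ := fun j => if u j = 0 then α j + u i else 0 with hβ
  have huS : u ∈ stdSimplex ℝ (Fin k) := hDs hu.1
  have hu01 : ∀ j, u j ∈ Icc (0:ℝ) 1 := fun j => mem_Icc_of_mem_stdSimplex huS j
  have hsv01 : ∀ j, 0 ≤ sv j ∧ sv j ≤ 1 := by
    intro j; by_cases h : u j = 0 <;> simp [hsv, h]
  -- 1 - σ x  =  mass off the support of u
  have hoff : ∀ x ∈ D, (1:ℝ) - σf x = ∑ j, (if u j = 0 then x j else 0) := by
    intro x hx
    rw [hσf]
    simp only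
    rw [← (hDs hx).2, ← Finset.sum_sub_distrib]
    refine Finset.sum_congr rfl fun j _ => ?_
    by_cases h : u j = 0 <;> simp [hsv, h]
  -- ψ x = ∑ β j x j  on D
  have hψβ : ∀ x ∈ D, x i - u i * σf x = ∑ j, β j * x j := by
    intro x hx
    have h1 : x i - u i = ∑ j, α j * x j := hα x hx
    have h2 : (1:ℝ) - σf x = ∑ j, (if u j = 0 then x j else 0) := hoff x hx
    have h3 : ∑ j, β j * x j
        = (∑ j, α j * x j) + u i * ∑ j, (if u j = 0 then x j else 0) := by
      rw [Finset.mul_sum, ← Finset.sum_add_distrib]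
      refine Finset.sum_congr rfl fun j _ => ?_
      by_cases h : u j = 0
      · simp only [hβ, h, if_true]
        ring
      · simp [hβ, h, hα0 j h]
    linear_combination h1 + u i * h2 - h3
  -- basic bounds on σ
  have hσ_nonneg : ∀ x ∈ D, 0 ≤ σf x := fun x hx =>
    Finset.sum_nonneg fun j _ => mul_nonneg (hsv01 j).1 ((hDs hx).1 j)
  have hσ_le_one : ∀ x ∈ D, σf x ≤ 1 := by
    intro x hx
    calc σf x ≤ ∑ j, x j :=
        Finset.sum_le_sum fun j _ => by nlinarith [(hsv01 j).1, (hsv01 j).2, (hDs hx).1 j]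
    _ = 1 := (hDs hx).2
  have hxi_le : ∀ x ∈ D, x i ≤ σf x := by
    intro x hx
    have h1 : x i = sv i * x i := by simp [hsv, hi]
    rw [h1]
    exact Finset.single_le_sum (f := fun j => sv j * x j)
      (fun j _ => mul_nonneg (hsv01 j).1 ((hDs hx).1 j)) (Finset.mem_univ i)
  -- |ψ| ≤ σ
  have hψ_le_σ : ∀ x ∈ D, |x i - u i * σf x| ≤ σf x := by
    intro x hx
    rw [abs_le]
    constructor
    · have := (hDs hx).1 i
      nlinarith [(hu01 i).1, (hu01 i).2, hσ_nonneg x hx]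
    · nlinarith [hxi_le x hx, (hu01 i).1, hσ_nonneg x hx]
  -- |ψ| ≤ K (1 - σ)
  set K : ℝ := ∑ j, |β j| with hK
  have hKnonneg : 0 ≤ K := Finset.sum_nonneg fun j _ => abs_nonneg _
  have hβK : ∀ j, |β j| ≤ K :=
    fun j => Finset.single_le_sum (f := fun j' => |β j'|) (fun j' _ => abs_nonneg _)
      (Finset.mem_univ j)
  have hψ_le_K : ∀ x ∈ D, |x i - u i * σf x| ≤ K * (1 - σf x) := by
    intro x hx
    rw [hψβ x hx]
    calc |∑ j, β j * x j| ≤ ∑ j, |β j * x j| := Finset.abs_sum_le_sum_abs _ _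
      _ ≤ ∑ j, K * ((1 - sv j) * x j) := by
          refine Finset.sum_le_sum fun j _ => ?_
          rw [abs_mul, abs_of_nonneg ((hDs hx).1 j)]
          by_cases h : u j = 0
          · have : sv j = 0 := by simp [hsv, h]
            rw [this]
            have := hβK j
            nlinarith [(hDs hx).1 j]
          · have hb : β j = 0 := by simp [hβ, h]
            have hs1 : sv j = 1 := by simp [hsv, h]
            rw [hb, hs1]
            simp
      _ = K * (1 - σf x) := by
          rw [hoff x hx, Finset.mul_sum]
          refine Finset.sum_congr rfl fun j _ => ?_
          by_cases h : u j = 0 <;> simp [hsv, h]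
  set s₀ : ℝ := 1 / (K + 1) with hs₀
  have hs₀pos : 0 < s₀ := by rw [hs₀]; positivity
  have hs₀le1 : s₀ ≤ 1 := by
    rw [hs₀, div_le_one (by linarith)]; linarith
  have hs₀K : s₀ * K ≤ 1 := by
    rw [hs₀, div_mul_eq_mul_div, div_le_one (by linarith)]; linarith
  have main : ∀ t : ℝ, |t| ≤ s₀ → ∀ x ∈ D, t * (x i - u i * σf x) ≤ 0 := by
    intro t ht
    set cfun : Fin k → ℝ :=
      fun j => sv j - t * ((if j = i then 1 else 0) - u i * sv j) with hcfun
    have hval : ∀ x : Fin k → ℝ,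
        ∑ j, cfun j * x j = σf x - t * (x i - u i * σf x) := by
      intro x
      have hδsum : ∑ j, (if j = i then (1:ℝ) else 0) * x j = x i := by
        simp [ite_mul]
      calc ∑ j, cfun j * x j
          = ∑ j, (sv j * x j - t * ((if j = i then 1 else 0) * x j)
              + (t * u i) * (sv j * x j)) := by
            refine Finset.sum_congr rfl fun j _ => ?_
            rw [hcfun]; ring
        _ = (∑ j, sv j * x j) - t * (∑ j, (if j = i then (1:ℝ) else 0) * x j)
              + (t * u i) * ∑ j, sv j * x j := by
            rw [Finset.sum_add_distrib, Finset.sum_sub_distrib, ← Finset.mul_sum,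
              ← Finset.mul_sum]
        _ = σf x - t * (x i - u i * σf x) := by
            rw [hδsum, hσf]; ring
    have hcD : ∀ x ∈ D, (∑ j, cfun j * x j) ∈ Icc (0:ℝ) 1 := by
      intro x hx
      rw [hval x]
      have h1 : |x i - u i * σf x| ≤ σf x := hψ_le_σ x hx
      have h2 : |x i - u i * σf x| ≤ K * (1 - σf x) := hψ_le_K x hx
      have h3 : |t * (x i - u i * σf x)| ≤ s₀ * |x i - u i * σf x| := by
        rw [abs_mul]; exact mul_le_mul_of_nonneg_right ht (abs_nonneg _)
      have h4 := abs_nonneg (x i - u i * σf x)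
      have h5 := neg_abs_le (t * (x i - u i * σf x))
      have h6 := le_abs_self (t * (x i - u i * σf x))
      constructor
      · nlinarith [hσ_nonneg x hx]
      · nlinarith [hσ_le_one x hx, hs₀pos]
    obtain ⟨c', hc'1, hc'eq⟩ := HM cfun hcD
    have hσu : σf u = 1 := by
      rw [hσf]
      simp only
      rw [← huS.2]
      refine Finset.sum_congr rfl fun j _ => ?_
      by_cases h : u j = 0 <;> simp [hsv, h]
    have huval : ∑ j, c' j * u j = 1 := by
      rw [hc'eq u hu.1, hval u, hσu]
      ring
    have hc'supp : ∀ j, u j ≠ 0 → c' j = 1 := by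
      intro j hj
      have hsum : ∑ j', (1 - c' j') * u j' = 0 := by
        have he : ∑ j', (1 - c' j') * u j' = (∑ j', u j') - ∑ j', c' j' * u j' := by
          rw [← Finset.sum_sub_distrib]
          exact Finset.sum_congr rfl fun j' _ => by ring
        rw [he, huS.2, huval]; ring
      have hterm := (Finset.sum_eq_zero_iff_of_nonneg (fun j' _ =>
        mul_nonneg (by linarith [(hc'1 j').2]) (huS.1 j'))).mp hsum j (Finset.mem_univ j)
      rcases mul_eq_zero.mp hterm with h | h
      · linarith
      · exact absurd h hj
    intro x hx
    have hge : σf x ≤ ∑ j, c' j * x j := by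
      rw [hσf]
      simp only
      refine Finset.sum_le_sum fun j _ => ?_
      by_cases h : u j = 0
      · have hz0 : sv j = 0 := by simp [hsv, h]
        rw [hz0, zero_mul]
        exact mul_nonneg (hc'1 j).1 ((hDs hx).1 j)
      · rw [hc'supp j h, show sv j = 1 by simp [hsv, h]]
    have heq2 := hc'eq x hx
    rw [hval x] at heq2
    linarith
  intro x hx
  have h1 := main s₀ (le_of_eq (abs_of_pos hs₀pos)) x hx
  have h2 := main (-s₀) (le_of_eq (by rw [abs_neg, abs_of_pos hs₀pos])) x hx
  have hψ0 : x i - u i * σf x = 0 := by nlinarith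
  have hσeq : σf x = ∑ j, (if u j = 0 then 0 else x j) := by
    rw [hσf]
    simp only
    refine Finset.sum_congr rfl fun j _ => ?_
    by_cases h : u j = 0 <;> simp [hsv, h]
  rw [← hσeq]
  linarith


lemma stepV {D : Set (Fin k → ℝ)} (hDs : D ⊆ stdSimplex ℝ (Fin k))
    (hSpanD : ∀ z ∈ stdSimplex ℝ (Fin k), z ∈ affineSpan ℝ D → z ∈ D)
    (HM : ∀ c : Fin k → ℝ, (∀ x ∈ D, (∑ i, c i * x i) ∈ Icc (0:ℝ) 1) →
      ∃ c' : Fin k → ℝ, (∀ i, c' i ∈ Icc (0:ℝ) 1) ∧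
        ∀ x ∈ D, ∑ i, c' i * x i = ∑ i, c i * x i)
    {u v : Fin k → ℝ} (hu : u ∈ D.extremePoints ℝ) (hv : v ∈ D.extremePoints ℝ)
    (huv : u ≠ v) : ∀ j, u j ≠ 0 → v j = 0 := by
  classical
  have hZ : ∀ d ∈ vectorSpan ℝ D, (∀ j, u j = 0 → d j = 0) → d = 0 :=
    fun d hd h => stepZ hDs hSpanD hu hd h
  set t : ℝ := ∑ j, (if u j = 0 then 0 else v j) with hts
  have hvS : v ∈ stdSimplex ℝ (Fin k) := hDs hv.1
  have huS : u ∈ stdSimplex ℝ (Fin k) := hDs hu.1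
  have hIV : ∀ i, u i ≠ 0 → v i = u i * t := by
    intro i hi
    exact stepIV hDs HM hu hZ hi v hv.1
  have ht0 : 0 ≤ t := Finset.sum_nonneg fun j _ => by
    by_cases h : u j = 0 <;> simp [h, hvS.1 j]
  have ht1 : t ≤ 1 := by
    calc t ≤ ∑ j, v j := Finset.sum_le_sum fun j _ => by
          by_cases h : u j = 0 <;> simp [h, hvS.1 j]
    _ = 1 := hvS.2
  rcases eq_or_lt_of_le ht0 with ht0' | ht0'
  · intro j hj
    have h := hIV j hj
    rw [← ht0', mul_zero] at h
    exact h
  rcases eq_or_lt_of_le ht1 with ht1' | ht1'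
  · exfalso
    have hoff : ∑ j, (if u j = 0 then v j else 0) = 0 := by
      have hsplit : (∑ j, (if u j = 0 then v j else 0)) + t = ∑ j, v j := by
        rw [hts, ← Finset.sum_add_distrib]
        refine Finset.sum_congr rfl fun j _ => ?_
        by_cases h : u j = 0 <;> simp [h]
      rw [hvS.2, ht1'] at hsplit
      linarith
    have hveq : v = u := by
      funext j
      by_cases h : u j = 0
      · have hterm := (Finset.sum_eq_zero_iff_of_nonneg (fun j' _ => by
          by_cases h' : u j' = 0 <;> simp [h', hvS.1 j'])).mp hoff j (Finset.mem_univ j)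
        rw [if_pos h] at hterm
        rw [h, hterm]
      · rw [hIV j h, ht1', mul_one]
    exact huv hveq.symm
  · exfalso
    have h1t : 0 < 1 - t := by linarith
    set g : Fin k → ℝ := (1 - t)⁻¹ • (v - t • u) with hg
    have hgS : g ∈ stdSimplex ℝ (Fin k) := by
      constructor
      · intro j
        show 0 ≤ (1-t)⁻¹ * (v j - t * u j)
        by_cases h : u j = 0
        · rw [h, mul_zero, sub_zero]
          exact mul_nonneg (inv_nonneg.mpr (le_of_lt h1t)) (hvS.1 j)
        · rw [hIV j h]
          have : (1-t)⁻¹ * (u j * t - t * u j) = 0 := by ring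
          linarith
      · show ∑ j, (1-t)⁻¹ * (v j - t * u j) = 1
        have : ∑ j, (1-t)⁻¹ * (v j - t * u j)
            = (1-t)⁻¹ * ((∑ j, v j) - t * ∑ j, u j) := by
          simp only [mul_sub, Finset.sum_sub_distrib, ← Finset.mul_sum]
        rw [this, hvS.2, huS.2, mul_one]
        field_simp
    have hgspan : g ∈ affineSpan ℝ D := by
      have hdir : v - u ∈ (affineSpan ℝ D).direction := by
        rw [direction_affineSpan]
        have := vsub_mem_vectorSpan ℝ hv.1 hu.1
        simpa [vsub_eq_sub] using this
      have h2 : (1-t)⁻¹ • (v - u) ∈ (affineSpan ℝ D).direction :=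
        Submodule.smul_mem _ _ hdir
      have h3 := AffineSubspace.vadd_mem_of_mem_direction h2 (mem_affineSpan ℝ hu.1)
      have hgeq : g = (1-t)⁻¹ • (v - u) + u := by
        funext j
        show (1-t)⁻¹ * (v j - t * u j) = (1-t)⁻¹ * (v j - u j) + u j
        field_simp
        ring
      rw [hgeq]
      simpa [vadd_eq_add, add_comm] using h3
    have hgD : g ∈ D := hSpanD g hgS hgspan
    have hseg : v ∈ openSegment ℝ u g := by
      refine ⟨t, 1 - t, ht0', h1t, by ring, ?_⟩
      funext j
      show t * u j + (1-t) * ((1-t)⁻¹ * (v j - t * u j)) = v j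
      field_simp
      ring
    exact huv (hv.2 hu.1 hgD hseg)

end Simplex12

/-- if `C` is a compact convex subset of a simplex
`T = conv{p₁,…,p_k}` (with `p` affinely independent) such that every affine form
`ω ∈ Ω(C)` extends to an affine form `w ∈ Ω(T)` taking the same values on `C`
(in particular every extreme form of `Ω(C)` has a preimage under restriction),
then `C` is itself a simplex: the convex hull of affinely independent points. -/
theorem section_with_full_pullback_is_simplex {N k : ℕ}
    (p : Fin k → (Fin N → ℝ)) (hp : AffineIndependent ℝ p)
    (T : Set (Fin N → ℝ)) (hT : T = convexHull ℝ (Set.range p))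
    (C : Set (Fin N → ℝ)) (hCT : C ⊆ T) (hconv : Convex ℝ C)
    (hcomp : IsCompact C) (hne : C.Nonempty)
    (hlift : ∀ ω ∈ OmegaSet C, ∃ w ∈ OmegaSet T,
      ∀ (x : Fin N → ℝ) (hx : x ∈ C), w ⟨x, hCT hx⟩ = ω ⟨x, hx⟩) :
    ∃ (j : ℕ) (q : Fin j → (Fin N → ℝ)),
      AffineIndependent ℝ q ∧ C = convexHull ℝ (Set.range q) := by
  classical
  set D : Set (Fin k → ℝ) := Simplex12.Dset p C with hD
  have hDs : D ⊆ stdSimplex ℝ (Fin k) := inter_subset_left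
  have hDconv : Convex ℝ D :=
    (convex_stdSimplex ℝ (Fin k)).inter (hconv.linear_preimage (Simplex12.bmap p))
  have hDcl : IsClosed D :=
    ((isCompact_stdSimplex ℝ (Fin k)).isClosed).inter
      (hcomp.isClosed.preimage (Simplex12.bmap p).continuous_of_finiteDimensional)
  have HM : ∀ c : Fin k → ℝ, (∀ x ∈ D, (∑ i, c i * x i) ∈ Icc (0:ℝ) 1) →
      ∃ c' : Fin k → ℝ, (∀ i, c' i ∈ Icc (0:ℝ) 1) ∧
        ∀ x ∈ D, ∑ i, c' i * x i = ∑ i, c i * x i :=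
    fun c hc => Simplex12.master p hp hT hCT hlift c hc
  have himg : ∀ y ∈ C, ∃ x, x ∈ D ∧ Simplex12.bmap p x = y := by
    intro y hy
    have h1 : y ∈ Simplex12.bmap p '' stdSimplex ℝ (Fin k) := by
      rw [← Simplex12.convexHull_range_eq_image, ← hT]; exact hCT hy
    obtain ⟨x, hx, hbx⟩ := h1
    exact ⟨x, ⟨hx, by rw [mem_preimage, hbx]; exact hy⟩, hbx⟩
  have hDne : D.Nonempty := by
    obtain ⟨y, hy⟩ := hne
    obtain ⟨x, hx, _⟩ := himg y hy
    exact ⟨x, hx⟩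
  have hSpanD : ∀ z ∈ stdSimplex ℝ (Fin k), z ∈ affineSpan ℝ D → z ∈ D :=
    fun z hz hzs => Simplex12.stepI hDs hDconv hDcl hDne HM hz hzs
  have hdisj : ∀ u ∈ D.extremePoints ℝ, ∀ v ∈ D.extremePoints ℝ, u ≠ v →
      ∀ j, u j ≠ 0 → v j = 0 :=
    fun u hu v hv huv => Simplex12.stepV hDs hSpanD HM hu hv huv
  have hED : D.extremePoints ℝ ⊆ D := extremePoints_subset
  have hsupp : ∀ u ∈ D.extremePoints ℝ, ∃ j, u j ≠ 0 := by
    intro u hu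
    by_contra h
    push_neg at h
    have h2 := (hDs (hED hu)).2
    rw [Finset.sum_congr rfl fun j _ => h j] at h2
    simp at h2
  have hEfin : (D.extremePoints ℝ).Finite := by
    have hinj : Function.Injective
        (fun u : D.extremePoints ℝ => (Classical.choose (hsupp u u.2) : Fin k)) := by
      intro u v huv
      by_contra hne'
      have hu' := Classical.choose_spec (hsupp u u.2)
      have hv' := Classical.choose_spec (hsupp v v.2)
      have h3 : (v : Fin k → ℝ) (Classical.choose (hsupp u u.2)) = 0 :=
        hdisj u u.2 v v.2 (fun h => hne' (Subtype.ext h)) _ hu'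
      have huv' : Classical.choose (hsupp u u.2) = Classical.choose (hsupp v v.2) := huv
      rw [huv'] at h3
      exact hv' h3
    exact Set.finite_coe_iff.mp (Finite.of_injective _ hinj)
  have hDcomp : IsCompact D := (isCompact_stdSimplex ℝ (Fin k)).of_isClosed_subset hDcl hDs
  have hDE : D = convexHull ℝ (D.extremePoints ℝ) := by
    conv_lhs => rw [← closure_convexHull_extremePoints hDcomp hDconv]
    exact (hEfin.isCompact_convexHull (𝕜 := ℝ)).isClosed.closure_eq
  -- enumerate the extreme points
  set Efin : Finset (Fin k → ℝ) := hEfin.toFinset with hEfin'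
  set q0 : Fin Efin.card → (Fin k → ℝ) :=
    fun r => ((Efin.equivFin.symm r : ↥Efin) : Fin k → ℝ) with hq0
  have hq0mem : ∀ r, q0 r ∈ D.extremePoints ℝ := by
    intro r
    have h9 := (Efin.equivFin.symm r).2
    exact (hEfin.mem_toFinset).mp h9
  have hq0inj : Function.Injective q0 := by
    intro r s hrs
    have := Subtype.ext hrs
    exact Efin.equivFin.symm.injective this
  have hq0range : Set.range q0 = D.extremePoints ℝ := by
    apply Subset.antisymm
    · rintro _ ⟨r, rfl⟩; exact hq0mem r
    · intro u hu
      have huE : u ∈ Efin := by rw [hEfin', Set.Finite.mem_toFinset]; exact hu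
      exact ⟨Efin.equivFin ⟨u, huE⟩, by rw [hq0]; simp⟩
  -- conclude
  refine ⟨Efin.card, fun r => Simplex12.bmap p (q0 r), ?_, ?_⟩
  · rw [affineIndependent_iff_of_fintype]
    intro w hw hws
    rw [Finset.weightedVSub_eq_linear_combination _ hw] at hws
    set z : Fin k → ℝ := ∑ r, w r • q0 r with hz
    have hbz : Simplex12.bmap p z = 0 := by
      rw [hz, map_sum]
      simpa [map_smul] using hws
    have hzsum : ∑ i, z i = 0 := by
      have h4 : ∀ i, z i = ∑ r, w r * q0 r i := by
        intro i
        rw [hz, Finset.sum_apply]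
        rfl
      calc ∑ i, z i = ∑ i, ∑ r, w r * q0 r i := Finset.sum_congr rfl fun i _ => h4 i
        _ = ∑ r, ∑ i, w r * q0 r i := Finset.sum_comm
        _ = ∑ r, w r * ∑ i, q0 r i := by
            refine Finset.sum_congr rfl fun r _ => ?_
            rw [Finset.mul_sum]
        _ = ∑ r, w r := by
            refine Finset.sum_congr rfl fun r _ => ?_
            rw [(hDs (hED (hq0mem r))).2, mul_one]
        _ = 0 := hw
    have hz0 : ∀ i, z i = 0 := by
      apply (affineIndependent_iff_of_fintype (k := ℝ) p).mp hp z hzsum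
      rw [Finset.weightedVSub_eq_linear_combination _ hzsum]
      exact hbz
    intro r
    obtain ⟨jidx, hjidx⟩ := hsupp (q0 r) (hq0mem r)
    have h6 : ∑ s', w s' * q0 s' jidx = 0 := by
      have h5 := hz0 jidx
      rw [hz, Finset.sum_apply] at h5
      simpa using h5
    have h7 : ∑ s', w s' * q0 s' jidx = w r * q0 r jidx := by
      apply Finset.sum_eq_single_of_mem r (Finset.mem_univ r)
      intro s' _ hsr
      have h8 : q0 s' jidx = 0 :=
        hdisj (q0 r) (hq0mem r) (q0 s') (hq0mem s') (fun h => hsr (hq0inj h.symm)) jidx hjidx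
      rw [h8, mul_zero]
    rw [h7] at h6
    rcases mul_eq_zero.mp h6 with h | h
    · exact h
    · exact absurd h hjidx
  · have hCD : C = Simplex12.bmap p '' D := by
      apply Subset.antisymm
      · intro y hy
        obtain ⟨x, hx, hbx⟩ := himg y hy
        exact ⟨x, hx, hbx⟩
      · rintro _ ⟨x, hx, rfl⟩
        exact hx.2
    rw [hCD, hDE, (Simplex12.bmap p).image_convexHull, ← hq0range, ← Set.range_comp]
    rfl

end
end

section
/- With the pentagon C and forms v₁,…,v₅ as above, the twelve forms {0, 1, v₁,…,v₅, 1−v₁,…,1−v₅} are pairwise distinct extreme points of Ω(C) (each nonconstant vᵢ attains both value 0 and value 1 on C). -/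
open Set

noncomputable def pentVertex (j : Fin 5) : Fin 2 → ℝ :=
  ![Real.cos (2 * Real.pi * (j : ℕ) / 5), Real.sin (2 * Real.pi * (j : ℕ) / 5)]

section Aux
open Real
private lemma hs5 : Real.sqrt 5 ^ 2 = 5 := Real.sq_sqrt (by norm_num)

private lemma cos2 : Real.cos (2*π/5) = (Real.sqrt 5 - 1)/4 := by
  rw [show (2*π/5 : ℝ) = 2*(π/5) by ring, Real.cos_two_mul, Real.cos_pi_div_five]
  linear_combination (1/8) * hs5

private lemma cos4 : Real.cos (4*π/5) = -(1 + Real.sqrt 5)/4 := by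
  rw [show (4*π/5 : ℝ) = 2*(2*π/5) by ring, Real.cos_two_mul, cos2]
  linear_combination (1/8) * hs5

private lemma sin4 : Real.sin (4*π/5) = (Real.sqrt 5 - 1)/2 * Real.sin (2*π/5) := by
  rw [show (4*π/5 : ℝ) = 2*(2*π/5) by ring, Real.sin_two_mul, cos2]; ring

private lemma cos6 : Real.cos (6*π/5) = Real.cos (4*π/5) := by
  rw [show (6*π/5 : ℝ) = 2*π - 4*π/5 by ring, Real.cos_two_pi_sub]

private lemma sin6 : Real.sin (6*π/5) = -Real.sin (4*π/5) := by
  rw [show (6*π/5 : ℝ) = 2*π - 4*π/5 by ring, Real.sin_two_pi_sub]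

private lemma combo_cos (φ : ℝ) :
    (3 - Real.sqrt 5)/2 * Real.cos φ + (Real.sqrt 5 - 1)/2 * Real.cos (φ + 4*π/5)
      = (Real.sqrt 5 - 1)/2 * Real.cos (φ + 2*π/5)
        + (3 - Real.sqrt 5)/2 * Real.cos (φ + 6*π/5) := by
  rw [Real.cos_add, Real.cos_add, Real.cos_add, cos6, sin6, cos4, sin4, cos2]
  linear_combination (-3/8 * Real.cos φ) * hs5

private lemma combo_sin (φ : ℝ) :
    (3 - Real.sqrt 5)/2 * Real.sin φ + (Real.sqrt 5 - 1)/2 * Real.sin (φ + 4*π/5)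
      = (Real.sqrt 5 - 1)/2 * Real.sin (φ + 2*π/5)
        + (3 - Real.sqrt 5)/2 * Real.sin (φ + 6*π/5) := by
  rw [Real.sin_add, Real.sin_add, Real.sin_add, cos6, sin6, cos4, sin4, cos2]
  linear_combination (-3/8 * Real.sin φ) * hs5

private lemma ang_eq (m : ℕ) :
    (2*π*((m % 5 : ℕ) : ℝ)/5 : ℝ) = 2*π*(m:ℝ)/5 + ((-(m / 5 : ℕ) : ℤ) : ℝ) * (2*π) := by
  have h := Nat.mod_add_div m 5
  have hR : ((m % 5 : ℕ) : ℝ) + 5 * ((m / 5 : ℕ) : ℝ) = (m : ℝ) := by exact_mod_cast h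
  rw [Int.cast_neg, Int.cast_natCast]
  linear_combination (2*π/5) * hR

private lemma pent_cos_val (i k : Fin 5) (r : ℝ)
    (hr : 2*π*((i:ℕ):ℝ)/5 + 2*π*((k:ℕ):ℝ)/5 = r) :
    pentVertex (i + k) 0 = Real.cos r := by
  show Real.cos (2 * π * (((i + k : Fin 5) : ℕ) : ℝ) / 5) = _
  rw [Fin.val_add, ang_eq, Real.cos_add_int_mul_two_pi, ← hr]
  push_cast
  ring_nf

private lemma pent_sin_val (i k : Fin 5) (r : ℝ)
    (hr : 2*π*((i:ℕ):ℝ)/5 + 2*π*((k:ℕ):ℝ)/5 = r) :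
    pentVertex (i + k) 1 = Real.sin r := by
  show Real.sin (2 * π * (((i + k : Fin 5) : ℕ) : ℝ) / 5) = _
  rw [Fin.val_add, ang_eq, Real.sin_add_int_mul_two_pi, ← hr]
  push_cast
  ring_nf

private lemma pent_combo (i : Fin 5) :
    ((3 - Real.sqrt 5)/2 : ℝ) • pentVertex i + ((Real.sqrt 5 - 1)/2 : ℝ) • pentVertex (i + 2)
      = ((Real.sqrt 5 - 1)/2 : ℝ) • pentVertex (i + 1)
        + ((3 - Real.sqrt 5)/2 : ℝ) • pentVertex (i + 3) := by
  set φ : ℝ := 2*π*((i:ℕ):ℝ)/5 with hφ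
  funext j
  have h0 : pentVertex i 0 = Real.cos φ := rfl
  have h1 : pentVertex i 1 = Real.sin φ := rfl
  fin_cases j
  · show (3 - Real.sqrt 5)/2 * pentVertex i 0 + (Real.sqrt 5 - 1)/2 * pentVertex (i+2) 0
      = (Real.sqrt 5 - 1)/2 * pentVertex (i+1) 0 + (3 - Real.sqrt 5)/2 * pentVertex (i+3) 0
    rw [h0, pent_cos_val i 2 (φ + 4*π/5) (by simp only [show ((1:Fin 5):ℕ)=1 from rfl, show ((2:Fin 5):ℕ)=2 from rfl, show ((3:Fin 5):ℕ)=3 from rfl]; push_cast; ring),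
        pent_cos_val i 1 (φ + 2*π/5) (by simp only [show ((1:Fin 5):ℕ)=1 from rfl, show ((2:Fin 5):ℕ)=2 from rfl, show ((3:Fin 5):ℕ)=3 from rfl]; push_cast; ring),
        pent_cos_val i 3 (φ + 6*π/5) (by simp only [show ((1:Fin 5):ℕ)=1 from rfl, show ((2:Fin 5):ℕ)=2 from rfl, show ((3:Fin 5):ℕ)=3 from rfl]; push_cast; ring)]
    exact combo_cos φ
  · show (3 - Real.sqrt 5)/2 * pentVertex i 1 + (Real.sqrt 5 - 1)/2 * pentVertex (i+2) 1
      = (Real.sqrt 5 - 1)/2 * pentVertex (i+1) 1 + (3 - Real.sqrt 5)/2 * pentVertex (i+3) 1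
    rw [h1, pent_sin_val i 2 (φ + 4*π/5) (by simp only [show ((1:Fin 5):ℕ)=1 from rfl, show ((2:Fin 5):ℕ)=2 from rfl, show ((3:Fin 5):ℕ)=3 from rfl]; push_cast; ring),
        pent_sin_val i 1 (φ + 2*π/5) (by simp only [show ((1:Fin 5):ℕ)=1 from rfl, show ((2:Fin 5):ℕ)=2 from rfl, show ((3:Fin 5):ℕ)=3 from rfl]; push_cast; ring),
        pent_sin_val i 3 (φ + 6*π/5) (by simp only [show ((1:Fin 5):ℕ)=1 from rfl, show ((2:Fin 5):ℕ)=2 from rfl, show ((3:Fin 5):ℕ)=3 from rfl]; push_cast; ring)]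
    exact combo_sin φ

open Real in
private lemma extreme_of_vals (C : Set (Fin 2 → ℝ)) (hC : C = convexHull ℝ (Set.range pentVertex))
    (hv : ∀ k, pentVertex k ∈ C)
    (ω : C → ℝ) (hω : ω ∈ OmegaSet C) (i : Fin 5)
    (hA : ω ⟨pentVertex i, hv i⟩ = 0 ∨ ω ⟨pentVertex i, hv i⟩ = 1)
    (hB : ω ⟨pentVertex (i+2), hv (i+2)⟩ = 0 ∨ ω ⟨pentVertex (i+2), hv (i+2)⟩ = 1)
    (hD : ω ⟨pentVertex (i+3), hv (i+3)⟩ = 0 ∨ ω ⟨pentVertex (i+3), hv (i+3)⟩ = 1) :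
    ω ∈ Set.extremePoints ℝ (OmegaSet C) := by
  rw [mem_extremePoints]
  refine ⟨hω, ?_⟩
  intro f hf g hg hseg
  obtain ⟨a, b, ha, hb, hab, hcomb⟩ := hseg
  have happ : ∀ x : C, a * f x + b * g x = ω x := fun x => by
    have := congrFun hcomb x; simpa using this
  have hpin : ∀ x : C, (ω x = 0 ∨ ω x = 1) → f x = g x := by
    intro x hx
    have h1 := hf.2 x; have h2 := hg.2 x
    have h3 := happ x
    rcases hx with h | h <;> rw [h] at h3
    · have hfx : f x = 0 := by nlinarith [h1.1, h2.1, h1.2, h2.2]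
      have hgx : g x = 0 := by nlinarith [h1.1, h2.1, h1.2, h2.2]
      rw [hfx, hgx]
    · have hfx : f x = 1 := by nlinarith [h1.1, h2.1, h1.2, h2.2]
      have hgx : g x = 1 := by nlinarith [h1.1, h2.1, h1.2, h2.2]
      rw [hfx, hgx]
  set t : ℝ := (3 - Real.sqrt 5)/2 with htdef
  have h5 := hs5
  have hsn := Real.sqrt_nonneg 5
  have ht0 : 0 ≤ t := by rw [htdef]; nlinarith
  have ht1 : t ≤ 1 := by rw [htdef]; nlinarith
  have ht1' : 0 < 1 - t := by rw [htdef]; nlinarith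
  have hCconv : Convex ℝ C := by rw [hC]; exact convex_convexHull ℝ _
  have key : ∀ (F : C → ℝ), IsAffineOn C F → ∀ (x y z w : Fin 2 → ℝ)
      (hx : x ∈ C) (hy : y ∈ C) (hz : z ∈ C) (hw : w ∈ C),
      t • x + (1-t) • y = t • z + (1-t) • w →
      t * F ⟨x,hx⟩ + (1-t) * F ⟨y,hy⟩ = t * F ⟨z,hz⟩ + (1-t) * F ⟨w,hw⟩ := by
    intro F hF x y z w hx hy hz hw heq
    have hm1 : t • x + (1-t) • y ∈ C := hCconv hx hy ht0 (by linarith) (by ring)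
    have hm2 : t • z + (1-t) • w ∈ C := heq ▸ hm1
    rw [← hF ⟨x,hx⟩ ⟨y,hy⟩ t ⟨ht0, ht1⟩ hm1, ← hF ⟨z,hz⟩ ⟨w,hw⟩ t ⟨ht0, ht1⟩ hm2]
    exact congrArg F (Subtype.ext heq)
  have comboI : ∀ j : Fin 5, t • pentVertex j + (1-t) • pentVertex (j+2)
      = t • pentVertex (j+3) + (1-t) • pentVertex (j+1) := by
    intro j
    have h := pent_combo j
    have e : ((Real.sqrt 5 - 1)/2 : ℝ) = 1 - t := by rw [htdef]; ring
    rw [e] at h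
    rw [show ((3 - Real.sqrt 5)/2 : ℝ) = t from htdef.symm] at h
    rw [h, add_comm]
  have hA' := hpin _ hA
  have hB' := hpin _ hB
  have hD' := hpin _ hD
  -- step 1 : vertex i+1
  have e1 := key f hf.1 (pentVertex i) (pentVertex (i+2)) (pentVertex (i+3)) (pentVertex (i+1))
    (hv i) (hv (i+2)) (hv (i+3)) (hv (i+1)) (comboI i)
  have e1g := key g hg.1 (pentVertex i) (pentVertex (i+2)) (pentVertex (i+3)) (pentVertex (i+1))
    (hv i) (hv (i+2)) (hv (i+3)) (hv (i+1)) (comboI i)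
  rw [hA', hB', hD'] at e1
  have eqP1 : f ⟨pentVertex (i+1), hv (i+1)⟩ = g ⟨pentVertex (i+1), hv (i+1)⟩ :=
    mul_left_cancel₀ (ne_of_gt ht1') (by linarith)
  -- step 2 : vertex i+4
  have r1 : i+3+2 = i := by rw [add_assoc, show (3+2 : Fin 5) = 0 by decide, add_zero]
  have r2 : i+3+3 = i+1 := by rw [add_assoc, show (3+3 : Fin 5) = 1 by decide]
  have r3 : i+3+1 = i+4 := by rw [add_assoc, show (3+1 : Fin 5) = 4 by decide]
  have c2 := comboI (i+3)
  rw [r1, r2, r3] at c2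
  have e2 := key f hf.1 (pentVertex (i+3)) (pentVertex i) (pentVertex (i+1)) (pentVertex (i+4))
    (hv (i+3)) (hv i) (hv (i+1)) (hv (i+4)) c2
  have e2g := key g hg.1 (pentVertex (i+3)) (pentVertex i) (pentVertex (i+1)) (pentVertex (i+4))
    (hv (i+3)) (hv i) (hv (i+1)) (hv (i+4)) c2
  rw [hA', hD', eqP1] at e2
  have eqP4 : f ⟨pentVertex (i+4), hv (i+4)⟩ = g ⟨pentVertex (i+4), hv (i+4)⟩ :=
    mul_left_cancel₀ (ne_of_gt ht1') (by linarith)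
  have hall : ∀ k, f ⟨pentVertex k, hv k⟩ = g ⟨pentVertex k, hv k⟩ := by
    intro k
    obtain ⟨d, rfl⟩ : ∃ d, k = i + d := ⟨k - i, by abel⟩
    fin_cases d
    · simpa using hA'
    · simpa using eqP1
    · simpa using hB'
    · simpa using hD'
    · simpa using eqP4
  have hsub : C ⊆ {p : Fin 2 → ℝ | ∃ hp : p ∈ C, f ⟨p, hp⟩ = g ⟨p, hp⟩} := by
    conv_lhs => rw [hC]
    apply convexHull_min
    · rintro p ⟨k, rfl⟩
      exact ⟨hv k, hall k⟩
    · rintro x ⟨hxC, hx⟩ y ⟨hyC, hy⟩ a' b' ha' hb' hab'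
      have hb'' : b' = 1 - a' := by linarith
      subst hb''
      have hmem : a' • x + (1-a') • y ∈ C := hCconv hxC hyC ha' (by linarith) (by ring)
      refine ⟨hmem, ?_⟩
      rw [hf.1 ⟨x,hxC⟩ ⟨y,hyC⟩ a' ⟨ha', by linarith⟩ hmem,
          hg.1 ⟨x,hxC⟩ ⟨y,hyC⟩ a' ⟨ha', by linarith⟩ hmem, hx, hy]
  have hfg : ∀ x : C, f x = g x := by
    intro x
    obtain ⟨hp, he⟩ := hsub x.2
    rwa [show (⟨x.1, hp⟩ : C) = x from Subtype.ext rfl] at he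
  refine ⟨funext fun x => ?_, funext fun x => ?_⟩
  · have h1 := happ x; have h2 := hfg x
    linear_combination h1 + b * h2 - f x * hab
  · have h1 := happ x; have h2 := hfg x
    linear_combination h1 - a * h2 - g x * hab

private lemma mem_omega_aff (C : Set (Fin 2 → ℝ)) (hC : C = convexHull ℝ (Set.range pentVertex))
    (φ : (Fin 2 → ℝ) →ᵃ[ℝ] ℝ) (hb : ∀ k, φ (pentVertex k) ∈ Set.Icc (0:ℝ) 1) :
    ∀ x : C, φ x.1 ∈ Set.Icc (0:ℝ) 1 := by
  intro x
  have hx : (x : Fin 2 → ℝ) ∈ convexHull ℝ (Set.range pentVertex) := by rw [← hC]; exact x.2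
  have h1 : φ x.1 ∈ φ '' (convexHull ℝ (Set.range pentVertex)) := ⟨x.1, hx, rfl⟩
  rw [AffineMap.image_convexHull] at h1
  refine convexHull_min ?_ (convex_Icc 0 1) h1
  rintro _ ⟨_, ⟨k, rfl⟩, rfl⟩
  exact hb k

private lemma mem_omega_v (C : Set (Fin 2 → ℝ)) (hC : C = convexHull ℝ (Set.range pentVertex))
    (φ : (Fin 2 → ℝ) →ᵃ[ℝ] ℝ) (hb : ∀ k, φ (pentVertex k) ∈ Set.Icc (0:ℝ) 1) :
    (fun x : C => φ x.1) ∈ OmegaSet C := by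
  constructor
  · intro x y t ht hm
    show φ _ = _
    rw [Convex.combo_affine_apply (by ring : t + (1 - t) = 1)]
    simp [smul_eq_mul]
  · exact mem_omega_aff C hC φ hb

private lemma mem_omega_v' (C : Set (Fin 2 → ℝ)) (hC : C = convexHull ℝ (Set.range pentVertex))
    (φ : (Fin 2 → ℝ) →ᵃ[ℝ] ℝ) (hb : ∀ k, φ (pentVertex k) ∈ Set.Icc (0:ℝ) 1) :
    (fun x : C => 1 - φ x.1) ∈ OmegaSet C := by
  constructor
  · intro x y t ht hm
    show 1 - φ _ = _
    rw [Convex.combo_affine_apply (by ring : t + (1 - t) = 1)]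
    simp only [smul_eq_mul]
    ring
  · intro x
    obtain ⟨l, r⟩ := mem_omega_aff C hC φ hb x
    exact ⟨by simp; linarith, by simp; linarith⟩

private noncomputable def nuv : Fin 4 → ℝ :=
  ![0, 1, (Real.sqrt 5 - 1)/2, 1 - (Real.sqrt 5 - 1)/2]

private def Emat : Fin 12 → Fin 5 → Fin 4 :=
  ![![0,0,0,0,0], ![1,1,1,1,1],
    ![1,2,0,0,2], ![2,1,2,0,0], ![0,2,1,2,0], ![0,0,2,1,2], ![2,0,0,2,1],
    ![0,3,1,1,3], ![3,0,3,1,1], ![1,3,0,3,1], ![1,1,3,0,3], ![3,1,1,3,0]]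

private lemma nuv_inj : Function.Injective nuv := by
  intro x y h
  fin_cases x <;> fin_cases y <;>
    first
      | rfl
      | (exfalso; simp [nuv] at h; nlinarith [hs5, Real.sqrt_nonneg 5])
      | (exfalso; simp [nuv] at h)

private lemma Emat_inj : Function.Injective Emat := by decide

end Aux

set_option maxHeartbeats 1600000 in
/-- for the regular pentagon `C` with its five extreme forms `v₁,…,v₅`
(values `1, γ, 0, 0, γ` around the vertices, `γ = (√5-1)/2`), the twelve forms
`{0, 1, v₁,…,v₅, 1-v₁,…,1-v₅}` are pairwise distinct extreme points of `Ω(C)`. -/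
theorem pentagon_twelve_extreme_forms
    (C : Set (Fin 2 → ℝ)) (hC : C = convexHull ℝ (Set.range pentVertex))
    (v : Fin 5 → ((Fin 2 → ℝ) →ᵃ[ℝ] ℝ))
    (hv1 : ∀ i, v i (pentVertex i) = 1)
    (hvγ : ∀ i, v i (pentVertex (i + 1)) = (Real.sqrt 5 - 1) / 2
             ∧ v i (pentVertex (i + 4)) = (Real.sqrt 5 - 1) / 2)
    (hv0 : ∀ i, v i (pentVertex (i + 2)) = 0 ∧ v i (pentVertex (i + 3)) = 0) :
    ∀ F : Fin 12 → (C → ℝ),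
      F = ![(fun _ => 0), (fun _ => 1),
            (fun x => v 0 x.1), (fun x => v 1 x.1), (fun x => v 2 x.1),
            (fun x => v 3 x.1), (fun x => v 4 x.1),
            (fun x => 1 - v 0 x.1), (fun x => 1 - v 1 x.1), (fun x => 1 - v 2 x.1),
            (fun x => 1 - v 3 x.1), (fun x => 1 - v 4 x.1)] →
      Function.Injective F ∧ ∀ j, F j ∈ Set.extremePoints ℝ (OmegaSet C) := by

  intro F hF
  have hv : ∀ k, pentVertex k ∈ C := by
    intro k; rw [hC]; exact subset_convexHull ℝ _ ⟨k, rfl⟩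
  have tab : ∀ (i d : Fin 5),
      v i (pentVertex (i + d)) = ![(1:ℝ), (Real.sqrt 5 - 1)/2, 0, 0, (Real.sqrt 5 - 1)/2] d := by
    intro i d
    fin_cases d
    · simpa using hv1 i
    · simpa using (hvγ i).1
    · simpa using (hv0 i).1
    · simpa using (hv0 i).2
    · simpa using (hvγ i).2
  have tab2 : ∀ (i k : Fin 5),
      v i (pentVertex k) = ![(1:ℝ), (Real.sqrt 5 - 1)/2, 0, 0, (Real.sqrt 5 - 1)/2] (k - i) := by
    intro i k
    have h := tab i (k - i)
    rwa [show i + (k - i) = k by abel] at h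
  have hbnd : ∀ (i k : Fin 5), v i (pentVertex k) ∈ Set.Icc (0:ℝ) 1 := by
    intro i k
    rw [tab2]
    generalize k - i = d
    fin_cases d <;> constructor <;> simp <;> nlinarith [hs5, Real.sqrt_nonneg 5]
  have hm0 : (fun _ : C => (0:ℝ)) ∈ OmegaSet C :=
    ⟨fun x y t ht h => by show (0:ℝ) = t * 0 + (1-t) * 0; ring,
     fun x => by constructor <;> norm_num⟩
  have hm1 : (fun _ : C => (1:ℝ)) ∈ OmegaSet C :=
    ⟨fun x y t ht h => by show (1:ℝ) = t * 1 + (1-t) * 1; ring,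
     fun x => by constructor <;> norm_num⟩
  have hE : ∀ (j : Fin 12) (k : Fin 5), F j ⟨pentVertex k, hv k⟩ = nuv (Emat j k) := by
    subst hF
    intro j k
    fin_cases j <;> fin_cases k
    · rfl
    · rfl
    · rfl
    · rfl
    · rfl
    · rfl
    · rfl
    · rfl
    · rfl
    · rfl
    · exact hv1 0
    · exact (hvγ 0).1
    · exact (hv0 0).1
    · exact (hv0 0).2
    · exact (hvγ 0).2
    · exact (hvγ 1).2
    · exact hv1 1
    · exact (hvγ 1).1
    · exact (hv0 1).1
    · exact (hv0 1).2
    · exact (hv0 2).2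
    · exact (hvγ 2).2
    · exact hv1 2
    · exact (hvγ 2).1
    · exact (hv0 2).1
    · exact (hv0 3).1
    · exact (hv0 3).2
    · exact (hvγ 3).2
    · exact hv1 3
    · exact (hvγ 3).1
    · exact (hvγ 4).1
    · exact (hv0 4).1
    · exact (hv0 4).2
    · exact (hvγ 4).2
    · exact hv1 4
    · show (1:ℝ) - v 0 (pentVertex 0) = 0; rw [hv1 0]; norm_num
    · show (1:ℝ) - v 0 (pentVertex (0+1)) = 1 - (Real.sqrt 5 - 1)/2; rw [(hvγ 0).1]
    · show (1:ℝ) - v 0 (pentVertex (0+2)) = 1; rw [(hv0 0).1]; norm_num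
    · show (1:ℝ) - v 0 (pentVertex (0+3)) = 1; rw [(hv0 0).2]; norm_num
    · show (1:ℝ) - v 0 (pentVertex (0+4)) = 1 - (Real.sqrt 5 - 1)/2; rw [(hvγ 0).2]
    · show (1:ℝ) - v 1 (pentVertex (1+4)) = 1 - (Real.sqrt 5 - 1)/2; rw [(hvγ 1).2]
    · show (1:ℝ) - v 1 (pentVertex 1) = 0; rw [hv1 1]; norm_num
    · show (1:ℝ) - v 1 (pentVertex (1+1)) = 1 - (Real.sqrt 5 - 1)/2; rw [(hvγ 1).1]
    · show (1:ℝ) - v 1 (pentVertex (1+2)) = 1; rw [(hv0 1).1]; norm_num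
    · show (1:ℝ) - v 1 (pentVertex (1+3)) = 1; rw [(hv0 1).2]; norm_num
    · show (1:ℝ) - v 2 (pentVertex (2+3)) = 1; rw [(hv0 2).2]; norm_num
    · show (1:ℝ) - v 2 (pentVertex (2+4)) = 1 - (Real.sqrt 5 - 1)/2; rw [(hvγ 2).2]
    · show (1:ℝ) - v 2 (pentVertex 2) = 0; rw [hv1 2]; norm_num
    · show (1:ℝ) - v 2 (pentVertex (2+1)) = 1 - (Real.sqrt 5 - 1)/2; rw [(hvγ 2).1]
    · show (1:ℝ) - v 2 (pentVertex (2+2)) = 1; rw [(hv0 2).1]; norm_num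
    · show (1:ℝ) - v 3 (pentVertex (3+2)) = 1; rw [(hv0 3).1]; norm_num
    · show (1:ℝ) - v 3 (pentVertex (3+3)) = 1; rw [(hv0 3).2]; norm_num
    · show (1:ℝ) - v 3 (pentVertex (3+4)) = 1 - (Real.sqrt 5 - 1)/2; rw [(hvγ 3).2]
    · show (1:ℝ) - v 3 (pentVertex 3) = 0; rw [hv1 3]; norm_num
    · show (1:ℝ) - v 3 (pentVertex (3+1)) = 1 - (Real.sqrt 5 - 1)/2; rw [(hvγ 3).1]
    · show (1:ℝ) - v 4 (pentVertex (4+1)) = 1 - (Real.sqrt 5 - 1)/2; rw [(hvγ 4).1]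
    · show (1:ℝ) - v 4 (pentVertex (4+2)) = 1; rw [(hv0 4).1]; norm_num
    · show (1:ℝ) - v 4 (pentVertex (4+3)) = 1; rw [(hv0 4).2]; norm_num
    · show (1:ℝ) - v 4 (pentVertex (4+4)) = 1 - (Real.sqrt 5 - 1)/2; rw [(hvγ 4).2]
    · show (1:ℝ) - v 4 (pentVertex 4) = 0; rw [hv1 4]; norm_num
  constructor
  · intro p q hpq
    apply Emat_inj
    funext k
    exact nuv_inj (by rw [← hE p k, ← hE q k, hpq])
  · subst hF
    intro j
    fin_cases j
    · exact extreme_of_vals C hC hv _ hm0 0 (Or.inl rfl) (Or.inl rfl) (Or.inl rfl)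
    · exact extreme_of_vals C hC hv _ hm1 0 (Or.inr rfl) (Or.inr rfl) (Or.inr rfl)
    · exact extreme_of_vals C hC hv _ (mem_omega_v C hC (v 0) (hbnd 0)) 0
        (Or.inr (hv1 0)) (Or.inl (hv0 0).1) (Or.inl (hv0 0).2)
    · exact extreme_of_vals C hC hv _ (mem_omega_v C hC (v 1) (hbnd 1)) 1
        (Or.inr (hv1 1)) (Or.inl (hv0 1).1) (Or.inl (hv0 1).2)
    · exact extreme_of_vals C hC hv _ (mem_omega_v C hC (v 2) (hbnd 2)) 2
        (Or.inr (hv1 2)) (Or.inl (hv0 2).1) (Or.inl (hv0 2).2)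
    · exact extreme_of_vals C hC hv _ (mem_omega_v C hC (v 3) (hbnd 3)) 3
        (Or.inr (hv1 3)) (Or.inl (hv0 3).1) (Or.inl (hv0 3).2)
    · exact extreme_of_vals C hC hv _ (mem_omega_v C hC (v 4) (hbnd 4)) 4
        (Or.inr (hv1 4)) (Or.inl (hv0 4).1) (Or.inl (hv0 4).2)
    · exact extreme_of_vals C hC hv _ (mem_omega_v' C hC (v 0) (hbnd 0)) 0
        (Or.inl (by show (1:ℝ) - v 0 (pentVertex 0) = 0; rw [hv1 0]; ring))
        (Or.inr (by show (1:ℝ) - v 0 (pentVertex (0+2)) = 1; rw [(hv0 0).1]; ring))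
        (Or.inr (by show (1:ℝ) - v 0 (pentVertex (0+3)) = 1; rw [(hv0 0).2]; ring))
    · exact extreme_of_vals C hC hv _ (mem_omega_v' C hC (v 1) (hbnd 1)) 1
        (Or.inl (by show (1:ℝ) - v 1 (pentVertex 1) = 0; rw [hv1 1]; ring))
        (Or.inr (by show (1:ℝ) - v 1 (pentVertex (1+2)) = 1; rw [(hv0 1).1]; ring))
        (Or.inr (by show (1:ℝ) - v 1 (pentVertex (1+3)) = 1; rw [(hv0 1).2]; ring))
    · exact extreme_of_vals C hC hv _ (mem_omega_v' C hC (v 2) (hbnd 2)) 2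
        (Or.inl (by show (1:ℝ) - v 2 (pentVertex 2) = 0; rw [hv1 2]; ring))
        (Or.inr (by show (1:ℝ) - v 2 (pentVertex (2+2)) = 1; rw [(hv0 2).1]; ring))
        (Or.inr (by show (1:ℝ) - v 2 (pentVertex (2+3)) = 1; rw [(hv0 2).2]; ring))
    · exact extreme_of_vals C hC hv _ (mem_omega_v' C hC (v 3) (hbnd 3)) 3
        (Or.inl (by show (1:ℝ) - v 3 (pentVertex 3) = 0; rw [hv1 3]; ring))
        (Or.inr (by show (1:ℝ) - v 3 (pentVertex (3+2)) = 1; rw [(hv0 3).1]; ring))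
        (Or.inr (by show (1:ℝ) - v 3 (pentVertex (3+3)) = 1; rw [(hv0 3).2]; ring))
    · exact extreme_of_vals C hC hv _ (mem_omega_v' C hC (v 4) (hbnd 4)) 4
        (Or.inl (by show (1:ℝ) - v 4 (pentVertex 4) = 0; rw [hv1 4]; ring))
        (Or.inr (by show (1:ℝ) - v 4 (pentVertex (4+2)) = 1; rw [(hv0 4).1]; ring))
        (Or.inr (by show (1:ℝ) - v 4 (pentVertex (4+3)) = 1; rw [(hv0 4).2]; ring))
end
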